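/- Let n ≥ 2 and ε > 0. Let w : (−ε, ε) → ℝ be continuously differentiable with w'(x₁) ≥ ε for all x₁ ∈ (−ε, ε). Let q₁ : (−ε, ε) × ℝ^{n−1} × ℝ^{n−1} → ℝ, (x₁, x', ξ') ↦ q₁(x₁, x', ξ'), be continuously differentiable, and assume there is C₀ > 0 such that for all (x₁, x', ξ'): |∂_{x₁} q₁(x₁, x', ξ')| ≤ C₀·(1 + |ξ'|²) and |∇_{x'} q₁(x₁, x', ξ')| ≤ C₀·(1 + |ξ'|²). Then there exist ε₁ ∈ (0, ε) and C > 0 such that for every (x₁, x', ξ₁, ξ') with x₁ ∈ (−ε, ε), ξ₁ ∈ ℝ, and |ξ₁| ≥ ε₁^{−1}·(1 + |ξ'|), one has (1/ξ₁) · [ 2ξ₁·( w'(x₁)·ξ₁² + ∂_{x₁} q₁(x₁, x', ξ') ) + 2·⟨ξ', ∇_{x'} q₁(x₁, x', ξ')⟩ ] / (2 + ξ₁² + |ξ'|²) ≥ 1/C. -/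

import Mathlib

/-- Estimate (6.2): the escape function `G₁ = log(2 + ξ₁² + |ξ'|²)` strictly increases
along the Hamiltonian flow of `p₂ = w(x₁)ξ₁² + q₁(x₁,x',ξ')` in the region where `|ξ₁|`
dominates `|ξ'|`: there are `ε₁ ∈ (0,ε)` and `C > 0` such that
`(1/ξ₁)·[2ξ₁(w'ξ₁² + ∂_{x₁}q₁) + 2⟨ξ', ∇_{x'}q₁⟩]/(2+ξ₁²+|ξ'|²) ≥ 1/C` whenever
`|ξ₁| ≥ ε₁⁻¹(1+|ξ'|)`. -/
theorem stmt_9 (n : ℕ) (hn : 2 ≤ n) (ε : ℝ) (hε : 0 < ε)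
    (w w' : ℝ → ℝ)
    (hw : ∀ x₁ ∈ Set.Ioo (-ε) ε, HasDerivAt w (w' x₁) x₁)
    (hw'cont : ContinuousOn w' (Set.Ioo (-ε) ε))
    (hw'pos : ∀ x₁ ∈ Set.Ioo (-ε) ε, ε ≤ w' x₁)
    (q₁ : ℝ → EuclideanSpace ℝ (Fin (n - 1)) → EuclideanSpace ℝ (Fin (n - 1)) → ℝ)
    (dq : ℝ → EuclideanSpace ℝ (Fin (n - 1)) → EuclideanSpace ℝ (Fin (n - 1)) → ℝ)
    (gq : ℝ → EuclideanSpace ℝ (Fin (n - 1)) → EuclideanSpace ℝ (Fin (n - 1)) →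
      EuclideanSpace ℝ (Fin (n - 1)))
    (hdq : ∀ x₁ ∈ Set.Ioo (-ε) ε, ∀ x' ξ',
      HasDerivAt (fun t => q₁ t x' ξ') (dq x₁ x' ξ') x₁)
    (hgq : ∀ x₁ ∈ Set.Ioo (-ε) ε, ∀ x' ξ',
      HasGradientAt (fun y => q₁ x₁ y ξ') (gq x₁ x' ξ') x')
    (hdqcont : ContinuousOn
      (fun p : ℝ × EuclideanSpace ℝ (Fin (n - 1)) × EuclideanSpace ℝ (Fin (n - 1)) =>
        dq p.1 p.2.1 p.2.2)
      (Set.Ioo (-ε) ε ×ˢ (Set.univ : Set (EuclideanSpace ℝ (Fin (n - 1)) ×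
        EuclideanSpace ℝ (Fin (n - 1))))))
    (hgqcont : ContinuousOn
      (fun p : ℝ × EuclideanSpace ℝ (Fin (n - 1)) × EuclideanSpace ℝ (Fin (n - 1)) =>
        gq p.1 p.2.1 p.2.2)
      (Set.Ioo (-ε) ε ×ˢ (Set.univ : Set (EuclideanSpace ℝ (Fin (n - 1)) ×
        EuclideanSpace ℝ (Fin (n - 1))))))
    (C₀ : ℝ) (hC₀ : 0 < C₀)
    (hbd1 : ∀ x₁ ∈ Set.Ioo (-ε) ε, ∀ x' ξ', |dq x₁ x' ξ'| ≤ C₀ * (1 + ‖ξ'‖ ^ 2))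
    (hbd2 : ∀ x₁ ∈ Set.Ioo (-ε) ε, ∀ x' ξ', ‖gq x₁ x' ξ'‖ ≤ C₀ * (1 + ‖ξ'‖ ^ 2)) :
    ∃ ε₁ ∈ Set.Ioo (0 : ℝ) ε, ∃ C > (0 : ℝ),
      ∀ x₁ ∈ Set.Ioo (-ε) ε, ∀ (x' ξ' : EuclideanSpace ℝ (Fin (n - 1))) (ξ₁ : ℝ),
        ε₁⁻¹ * (1 + ‖ξ'‖) ≤ |ξ₁| →
        1 / C ≤ (1 / ξ₁) *
          ((2 * ξ₁ * (w' x₁ * ξ₁ ^ 2 + dq x₁ x' ξ')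
              + 2 * (inner ℝ ξ' (gq x₁ x' ξ') : ℝ)) /
            (2 + ξ₁ ^ 2 + ‖ξ'‖ ^ 2)) := by
  have hC₀' : (0:ℝ) < 4 * C₀ := by linarith
  set ε₁ := min (ε / 2) (min 1 (Real.sqrt (ε / (4 * C₀)))) with hε₁def
  have hsq : 0 < Real.sqrt (ε / (4 * C₀)) := Real.sqrt_pos.mpr (by positivity)
  have hε₁pos : 0 < ε₁ := lt_min (by linarith) (lt_min one_pos hsq)
  have hε₁lt : ε₁ < ε := lt_of_le_of_lt (min_le_left _ _) (by linarith)
  have hε₁le1 : ε₁ ≤ 1 := le_trans (min_le_right _ _) (min_le_left _ _)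
  have hkey : 4 * C₀ * ε₁ ^ 2 ≤ ε := by
    have h1 : ε₁ ≤ Real.sqrt (ε / (4 * C₀)) :=
      le_trans (min_le_right _ _) (min_le_right _ _)
    have h2 : ε₁ ^ 2 ≤ ε / (4 * C₀) := by
      have hss := Real.sq_sqrt (le_of_lt (show (0:ℝ) < ε / (4 * C₀) by positivity))
      nlinarith [hε₁pos.le]
    calc 4 * C₀ * ε₁ ^ 2 ≤ 4 * C₀ * (ε / (4 * C₀)) := by nlinarith
      _ = ε := by field_simp
  refine ⟨ε₁, ⟨hε₁pos, hε₁lt⟩, 4 / ε, by positivity, ?_⟩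
  intro x₁ hx₁ x' ξ' ξ₁ hξ₁
  set s := ‖ξ'‖ with hs
  have hs0 : 0 ≤ s := norm_nonneg _
  have h1s : 1 + s ≤ ε₁ * |ξ₁| := by
    have h := mul_le_mul_of_nonneg_left hξ₁ hε₁pos.le
    rwa [mul_inv_cancel_left₀ hε₁pos.ne'] at h
  have ha1 : (1:ℝ) ≤ |ξ₁| := by nlinarith [abs_nonneg ξ₁]
  have hξ₁ne : ξ₁ ≠ 0 := by
    intro h; rw [h, abs_zero] at ha1; linarith
  have hsa : s ≤ |ξ₁| := by nlinarith [abs_nonneg ξ₁]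
  have hsqr : 1 + s ^ 2 ≤ ε₁ ^ 2 * ξ₁ ^ 2 := by
    nlinarith [mul_self_le_mul_self (by linarith : (0:ℝ) ≤ 1 + s) h1s, sq_abs ξ₁]
  set I := (inner ℝ ξ' (gq x₁ x' ξ') : ℝ) with hIdef
  set d := dq x₁ x' ξ' with hddef
  have hd := hbd1 x₁ hx₁ x' ξ'
  have hg := hbd2 x₁ hx₁ x' ξ'
  have hI : |I| ≤ s * (C₀ * (1 + s ^ 2)) :=
    le_trans (abs_real_inner_le_norm _ _) (mul_le_mul_of_nonneg_left hg hs0)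
  have hdbd : |d| ≤ C₀ * ε₁ ^ 2 * ξ₁ ^ 2 :=
    le_trans hd (by nlinarith)
  have hw' := hw'pos x₁ hx₁
  clear_value I d ε₁ s
  clear hw hdq hgq hdqcont hgqcont hw'cont hbd1 hbd2 hw'pos hd hg hξ₁ hIdef hddef
  clear hs hε₁def hsq hx₁ q₁ dq gq ξ' x'
  have hB : |2 * I / ξ₁| ≤ 2 * C₀ * ε₁ ^ 2 * ξ₁ ^ 2 := by
    rw [abs_div, div_le_iff₀ (by positivity : (0:ℝ) < |ξ₁|), abs_mul, abs_two]
    have step1 : s * (C₀ * (1 + s ^ 2)) ≤ |ξ₁| * (C₀ * (ε₁ ^ 2 * ξ₁ ^ 2)) :=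
      mul_le_mul hsa (by nlinarith) (by positivity) (abs_nonneg _)
    have step2 : |ξ₁| * (C₀ * (ε₁ ^ 2 * ξ₁ ^ 2)) = C₀ * ε₁ ^ 2 * ξ₁ ^ 2 * |ξ₁| := by
      ring
    linarith
  have hN : ε * ξ₁ ^ 2 ≤ 2 * (w' x₁ * ξ₁ ^ 2 + d) + 2 * I / ξ₁ := by
    have h1 := (abs_le.mp hdbd).1
    have h2 := (abs_le.mp hB).1
    have h3 : 4 * C₀ * ε₁ ^ 2 * ξ₁ ^ 2 ≤ ε * ξ₁ ^ 2 := by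
      have := mul_le_mul_of_nonneg_right hkey (sq_nonneg ξ₁)
      linarith
    have h4 : ε * ξ₁ ^ 2 ≤ w' x₁ * ξ₁ ^ 2 :=
      mul_le_mul_of_nonneg_right hw' (sq_nonneg ξ₁)
    linarith
  have hD : (0:ℝ) < 2 + ξ₁ ^ 2 + s ^ 2 := by positivity
  have hDle : 2 + ξ₁ ^ 2 + s ^ 2 ≤ 4 * ξ₁ ^ 2 := by
    have h5 : s * s ≤ |ξ₁| * |ξ₁| := mul_self_le_mul_self hs0 hsa
    have h6 : (1:ℝ) * 1 ≤ |ξ₁| * |ξ₁| := mul_self_le_mul_self zero_le_one ha1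
    have h7 : |ξ₁| * |ξ₁| = ξ₁ ^ 2 := by rw [← sq_abs ξ₁]; ring
    nlinarith
  have heq : (1 / ξ₁) *
      ((2 * ξ₁ * (w' x₁ * ξ₁ ^ 2 + d) + 2 * I) / (2 + ξ₁ ^ 2 + s ^ 2)) =
      (2 * (w' x₁ * ξ₁ ^ 2 + d) + 2 * I / ξ₁) / (2 + ξ₁ ^ 2 + s ^ 2) := by
    field_simp
  rw [heq, one_div_div, le_div_iff₀ hD]
  have hεD : ε * (2 + ξ₁ ^ 2 + s ^ 2) ≤ ε * (4 * ξ₁ ^ 2) :=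
    mul_le_mul_of_nonneg_left hDle hε.le
  linarith
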